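/- Every sign vector of a subspace lies below a composition of signs of elementary vectors: for every x ∈ V ⊆ R^n, sign(x) is the composition of sign(v_1), …, sign(v_k) for some elementary vectors v_1,…,v_k of V, each satisfying sign(v_j) ≤ sign(x). -/

import Mathlib

/-- `v` is an elementary vector of the subspace `V`: a nonzero vector of `V` with minimal
support among nonzero vectors of `V`. -/
def IsElementary {Q : Type*} [Field Q] {n : ℕ} (V : Submodule Q (Fin n → Q))
    (v : Fin n → Q) : Prop :=
  v ∈ V ∧ v ≠ 0 ∧
    ∀ x ∈ V, x ≠ 0 → {i | x i ≠ 0} ⊆ {i | v i ≠ 0} → {i | x i ≠ 0} = {i | v i ≠ 0}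

/-- The partial order on sign entries `{-,0,+}` in which `0` lies below both `-` and `+`. -/
def SignLE (a b : SignType) : Prop := a = 0 ∨ a = b

/-- Composition of a list of sign vectors: at each index, take the first nonzero entry. -/
def compList {n : ℕ} (L : List (Fin n → SignType)) : Fin n → SignType :=
  fun i => (L.map (fun σ => σ i)).foldr (fun a b => if a ≠ 0 then a else b) 0

lemma signLE_refl (a : SignType) : SignLE a a := Or.inr rfl

lemma signLE_trans {a b c : SignType} (h1 : SignLE a b) (h2 : SignLE b c) : SignLE a c := by
  rcases h1 with h | h
  · exact Or.inl h
  · subst h; exact h2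

lemma signLE_eq_of_ne_zero {a b : SignType} (h : SignLE a b) (ha : a ≠ 0) : a = b := by
  rcases h with h | h
  · exact absurd h ha
  · exact h

lemma signLE_add {a b : ℝ} (h : |b| ≤ |a|) : SignLE (SignType.sign (a + b)) (SignType.sign a) := by
  rcases lt_trichotomy a 0 with ha | ha | ha
  · have h1 : a + b ≤ 0 := by
      have hb := le_abs_self b
      rw [abs_of_neg ha] at h
      linarith
    rcases eq_or_lt_of_le h1 with he | hl
    · exact Or.inl (by rw [he, sign_zero])
    · exact Or.inr (by rw [sign_neg hl, sign_neg ha])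
  · subst ha
    have : b = 0 := by
      have := abs_nonneg b
      simp only [abs_zero] at h
      have : |b| = 0 := le_antisymm h this
      exact abs_eq_zero.mp this
    subst this
    exact Or.inl (by simp)
  · have h1 : 0 ≤ a + b := by
      have hb := neg_abs_le b
      rw [abs_of_pos ha] at h
      linarith
    rcases eq_or_lt_of_le h1 with he | hl
    · exact Or.inl (by rw [← he, sign_zero])
    · exact Or.inr (by rw [sign_pos hl, sign_pos ha])

lemma div_pos_of_sign_eq {a b : ℝ} (hb : b ≠ 0) (h : SignType.sign b = SignType.sign a) :
    0 < a / b := by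
  rcases lt_trichotomy b 0 with hbn | hb0 | hbp
  · rw [sign_neg hbn] at h
    have ha : a < 0 := by
      rcases lt_trichotomy a 0 with h1 | h1 | h1
      · exact h1
      · subst h1; simp at h
      · rw [sign_pos h1] at h; simp at h
    exact div_pos_of_neg_of_neg ha hbn
  · exact absurd hb0 hb
  · rw [sign_pos hbp] at h
    have ha : 0 < a := by
      rcases lt_trichotomy a 0 with h1 | h1 | h1
      · rw [sign_neg h1] at h; simp at h
      · subst h1; simp at h
      · exact h1
    exact div_pos ha hbp

/-- Every nonzero vector of `V` dominates (conformally) some elementary vector of `V`. -/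
lemma exists_elementary_conformal {n : ℕ} (V : Submodule ℝ (Fin n → ℝ))
    (x : Fin n → ℝ) (hx : x ∈ V) (hx0 : x ≠ 0) :
    ∃ v, IsElementary V v ∧ ∀ i, SignLE (SignType.sign (v i)) (SignType.sign (x i)) := by
  suffices H : ∀ k : ℕ, ∀ y : Fin n → ℝ,
      (Finset.univ.filter fun i => y i ≠ 0).card ≤ k → y ∈ V → y ≠ 0 →
      (∀ i, SignLE (SignType.sign (y i)) (SignType.sign (x i))) →
      ∃ v, IsElementary V v ∧ ∀ i, SignLE (SignType.sign (v i)) (SignType.sign (x i)) by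
    exact H _ x le_rfl hx hx0 (fun i => signLE_refl _)
  intro k
  induction k with
  | zero =>
    intro y hcard hyV hy0 _
    exfalso
    apply hy0
    funext i
    show y i = 0
    by_contra hyi
    have : i ∈ Finset.univ.filter fun i => y i ≠ 0 := by simp [hyi]
    have := Finset.card_pos.mpr ⟨i, this⟩
    omega
  | succ k ih =>
    intro y hcard hyV hy0 hconf
    by_cases hel : ∀ z ∈ V, z ≠ 0 → {i | z i ≠ 0} ⊆ {i | y i ≠ 0} → {i | z i ≠ 0} = {i | y i ≠ 0}
    · exact ⟨y, ⟨hyV, hy0, hel⟩, hconf⟩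
    · push_neg at hel
      obtain ⟨z, hzV, hz0, hsub, hne⟩ := hel
      -- the support of z as a finset
      have hzsupp : ∀ i, z i ≠ 0 → y i ≠ 0 := fun i h => hsub h
      have hSz : (Finset.univ.filter fun i => z i ≠ 0).Nonempty := by
        rcases Function.ne_iff.mp hz0 with ⟨i, hi⟩
        exact ⟨i, by simpa using hi⟩
      obtain ⟨i0, hi0mem, hmin⟩ :=
        Finset.exists_min_image (Finset.univ.filter fun i => z i ≠ 0)
          (fun i => |y i / z i|) hSz
      have hzi0 : z i0 ≠ 0 := by simpa using hi0mem
      have hyi0 : y i0 ≠ 0 := hzsupp i0 hzi0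
      set t : ℝ := -(y i0 / z i0) with ht_def
      have ht0 : t ≠ 0 := neg_ne_zero.mpr (div_ne_zero hyi0 hzi0)
      set y' : Fin n → ℝ := y + t • z with hy'_def
      have hy'V : y' ∈ V := V.add_mem hyV (V.smul_mem t hzV)
      have hy'i : ∀ i, y' i = y i + t * z i := fun i => rfl
      have hy'i0 : y' i0 = 0 := by
        rw [hy'i, ht_def]
        field_simp
        ring
      have hbnd : ∀ i, z i ≠ 0 → |t * z i| ≤ |y i| := by
        intro i hzi
        have h1 := hmin i (by simpa using hzi)
        have : |t| = |y i0 / z i0| := by rw [ht_def, abs_neg]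
        calc |t * z i| = |t| * |z i| := abs_mul _ _
          _ = |y i0 / z i0| * |z i| := by rw [this]
          _ ≤ |y i / z i| * |z i| := mul_le_mul_of_nonneg_right h1 (abs_nonneg _)
          _ = |y i / z i * z i| := (abs_mul _ _).symm
          _ = |y i| := by rw [div_mul_cancel₀ _ hzi]
      have hconf' : ∀ i, SignLE (SignType.sign (y' i)) (SignType.sign (y i)) := by
        intro i
        by_cases hzi : z i = 0
        · rw [hy'i, hzi, mul_zero, add_zero]; exact signLE_refl _
        · rw [hy'i]; exact signLE_add (hbnd i hzi)
      have hsupp' : ∀ i, y' i ≠ 0 → y i ≠ 0 := by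
        intro i hi
        by_contra hyi
        have hzi : z i = 0 := by
          by_contra hzi
          exact (hzsupp i hzi) hyi
        apply hi
        rw [hy'i, hyi, hzi, mul_zero, add_zero]
      have hy'0 : y' ≠ 0 := by
        intro h
        apply hne
        ext i
        simp only [Set.mem_setOf_eq]
        have : y i = -(t * z i) := by
          have := congrFun h i
          rw [hy'i] at this
          simp only [Pi.zero_apply] at this
          linarith
        rw [this]
        simp only [ne_eq, neg_eq_zero, mul_eq_zero, not_or]
        constructor
        · intro hz; exact ⟨ht0, hz⟩
        · intro ⟨_, hz⟩; exact hz
      have hss : (Finset.univ.filter fun i => y' i ≠ 0) ⊂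
          (Finset.univ.filter fun i => y i ≠ 0) := by
        rw [Finset.ssubset_iff_of_subset]
        · exact ⟨i0, by simp [hyi0], by simp [hy'i0]⟩
        · intro i hi
          simp only [Finset.mem_filter, Finset.mem_univ, true_and] at hi ⊢
          exact hsupp' i hi
      have hcard' : (Finset.univ.filter fun i => y' i ≠ 0).card ≤ k := by
        have := Finset.card_lt_card hss
        omega
      exact ih y' hcard' hy'V hy'0
        (fun i => signLE_trans (hconf' i) (hconf i))

theorem sign_eq_composition_of_cocircuits {n : ℕ} (V : Submodule ℝ (Fin n → ℝ))
    (x : Fin n → ℝ) (hx : x ∈ V) :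
    ∃ L : List (Fin n → ℝ),
      (∀ v ∈ L, IsElementary V v) ∧
      (∀ v ∈ L, ∀ i, SignLE (SignType.sign (v i)) (SignType.sign (x i))) ∧
      compList (L.map (fun v i => SignType.sign (v i))) =
        fun i => SignType.sign (x i) := by
  suffices H : ∀ k : ℕ, ∀ y : Fin n → ℝ,
      (Finset.univ.filter fun i => y i ≠ 0).card ≤ k → y ∈ V →
      ∃ L : List (Fin n → ℝ),
        (∀ v ∈ L, IsElementary V v) ∧
        (∀ v ∈ L, ∀ i, SignLE (SignType.sign (v i)) (SignType.sign (y i))) ∧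
        compList (L.map (fun v i => SignType.sign (v i))) =
          fun i => SignType.sign (y i) by
    exact H _ x le_rfl hx
  intro k
  induction k with
  | zero =>
    intro y hcard hyV
    have hy0 : y = 0 := by
      funext i
      show y i = 0
      by_contra hyi
      have : i ∈ Finset.univ.filter fun i => y i ≠ 0 := by simp [hyi]
      have := Finset.card_pos.mpr ⟨i, this⟩
      omega
    refine ⟨[], by simp, by simp, ?_⟩
    funext i
    simp [compList, hy0]
  | succ k ih =>
    intro y hcard hyV
    by_cases hy0 : y = 0
    · refine ⟨[], by simp, by simp, ?_⟩
      funext i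
      simp [compList, hy0]
    · obtain ⟨v, hvel, hvconf⟩ := exists_elementary_conformal V y hyV hy0
      have hvV := hvel.1
      have hv0 := hvel.2.1
      have hsigns : ∀ i, v i ≠ 0 → SignType.sign (v i) = SignType.sign (y i) := by
        intro i hi
        exact signLE_eq_of_ne_zero (hvconf i) (by simp [sign_eq_zero_iff, hi])
      have hSv : (Finset.univ.filter fun i => v i ≠ 0).Nonempty := by
        rcases Function.ne_iff.mp hv0 with ⟨i, hi⟩
        exact ⟨i, by simpa using hi⟩
      obtain ⟨i0, hi0mem, hmin⟩ :=
        Finset.exists_min_image (Finset.univ.filter fun i => v i ≠ 0)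
          (fun i => y i / v i) hSv
      have hvi0 : v i0 ≠ 0 := by simpa using hi0mem
      set t : ℝ := y i0 / v i0 with ht_def
      have ht : 0 < t := div_pos_of_sign_eq hvi0 (hsigns i0 hvi0)
      have htratio : ∀ i, v i ≠ 0 → 0 < y i / v i :=
        fun i hi => div_pos_of_sign_eq hi (hsigns i hi)
      set y' : Fin n → ℝ := y - t • v with hy'_def
      have hy'V : y' ∈ V := V.sub_mem hyV (V.smul_mem t hvV)
      have hy'i : ∀ i, y' i = y i + -(t * v i) := by
        intro i
        simp [hy'_def, sub_eq_add_neg]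
      have hy'i0 : y' i0 = 0 := by
        rw [hy'i, ht_def]
        field_simp
        ring
      have hbnd : ∀ i, v i ≠ 0 → |(-(t * v i))| ≤ |y i| := by
        intro i hvi
        have h1 := hmin i (by simpa using hvi)
        calc |(-(t * v i))| = |t| * |v i| := by rw [abs_neg, abs_mul]
          _ = t * |v i| := by rw [abs_of_pos ht]
          _ ≤ (y i / v i) * |v i| := mul_le_mul_of_nonneg_right h1 (abs_nonneg _)
          _ = |y i / v i| * |v i| := by rw [abs_of_pos (htratio i hvi)]
          _ = |y i / v i * v i| := (abs_mul _ _).symm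
          _ = |y i| := by rw [div_mul_cancel₀ _ hvi]
      have hconf' : ∀ i, SignLE (SignType.sign (y' i)) (SignType.sign (y i)) := by
        intro i
        by_cases hvi : v i = 0
        · rw [hy'i, hvi, mul_zero, neg_zero, add_zero]; exact signLE_refl _
        · rw [hy'i]; exact signLE_add (hbnd i hvi)
      have hsupp' : ∀ i, y' i ≠ 0 → y i ≠ 0 := by
        intro i hi
        intro hyi
        rcases hconf' i with h | h
        · exact hi (sign_eq_zero_iff.mp h)
        · rw [hyi, sign_zero] at h
          exact hi (sign_eq_zero_iff.mp h)
      have hyi0 : y i0 ≠ 0 := by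
        intro h
        have := hsigns i0 hvi0
        rw [h, sign_zero, sign_eq_zero_iff] at this
        exact hvi0 this
      have hss : (Finset.univ.filter fun i => y' i ≠ 0) ⊂
          (Finset.univ.filter fun i => y i ≠ 0) := by
        rw [Finset.ssubset_iff_of_subset]
        · exact ⟨i0, by simp [hyi0], by simp [hy'i0]⟩
        · intro i hi
          simp only [Finset.mem_filter, Finset.mem_univ, true_and] at hi ⊢
          exact hsupp' i hi
      have hcard' : (Finset.univ.filter fun i => y' i ≠ 0).card ≤ k := by
        have := Finset.card_lt_card hss
        omega
      obtain ⟨L', hL'el, hL'conf, hL'comp⟩ := ih y' hcard' hy'V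
      refine ⟨v :: L', ?_, ?_, ?_⟩
      · intro w hw
        rcases List.mem_cons.mp hw with rfl | hw
        · exact hvel
        · exact hL'el w hw
      · intro w hw i
        rcases List.mem_cons.mp hw with rfl | hw
        · exact hvconf i
        · exact signLE_trans (hL'conf w hw i) (hconf' i)
      · funext i
        have hstep : compList ((v :: L').map (fun v i => SignType.sign (v i))) i =
            if SignType.sign (v i) ≠ 0 then SignType.sign (v i)
            else compList (L'.map (fun v i => SignType.sign (v i))) i := by
          simp [compList]
        rw [hstep]
        by_cases hvi : v i = 0
        · rw [if_neg (by simp [hvi])]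
          have := congrFun hL'comp i
          rw [this]
          congr 1
          rw [hy'i, hvi, mul_zero, neg_zero, add_zero]
        · rw [if_pos (by simp [sign_eq_zero_iff, hvi]), hsigns i hvi]
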